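/- Let K be a field, n ≥ 1, and p ∈ K^n. Then the 'curiously commuting vectors' identity [g, F_p g, …, F_p^{n-1} g] b = [b, F_p b, …, F_p^{n-1} b] g holds for all b, g ∈ K^n. -/

import Mathlib

open Matrix

/-- The second companion matrix `F_p` of `p ∈ K^{n+1}`: columns `0,…,n-1` are
`e_1,…,e_n` and the last column is `p`. -/
def companion {K : Type*} [Field K] {n : ℕ} (p : Fin (n + 1) → K) :
    Matrix (Fin (n + 1)) (Fin (n + 1)) K :=
  Matrix.of fun i j => if j = Fin.last n then p i else if (i : ℕ) = (j : ℕ) + 1 then 1 else 0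

/-- The reachability (Krylov) matrix `R(A, g) = [g, Ag, …, A^{n-1} g]`. -/
def krylov {K : Type*} [Field K] {n : ℕ} (A : Matrix (Fin n) (Fin n) K) (g : Fin n → K) :
    Matrix (Fin n) (Fin n) K :=
  Matrix.of fun i j => (A ^ (j : ℕ)).mulVec g i

/-- `b(A) = Σ_{i=0}^{n-1} b_i A^i`. -/
def polyEval {K : Type*} [Field K] {n : ℕ} (b : Fin n → K) (A : Matrix (Fin n) (Fin n) K) :
    Matrix (Fin n) (Fin n) K :=
  ∑ i : Fin n, b i • A ^ (i : ℕ)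

lemma krylov_mulVec {K : Type*} [Field K] {n : ℕ} (A : Matrix (Fin n) (Fin n) K)
    (g b : Fin n → K) : (krylov A g).mulVec b = (polyEval b A).mulVec g := by
  ext i
  simp only [krylov, polyEval, Matrix.mulVec, Matrix.of_apply, dotProduct,
    Matrix.sum_apply, Matrix.smul_apply, Finset.sum_mul, smul_eq_mul]
  rw [Finset.sum_comm]
  congr 1; ext j; congr 1; ext k
  ring

lemma companion_pow_e0 {K : Type*} [Field K] {n : ℕ} (p : Fin (n + 1) → K)
    (k : ℕ) (hk : k ≤ n) :
    ((companion p) ^ k).mulVec (Pi.single (0 : Fin (n + 1)) 1) =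
      Pi.single (⟨k, Nat.lt_succ_of_le hk⟩ : Fin (n + 1)) 1 := by
  induction k with
  | zero =>
      ext i
      simp [Matrix.one_apply, Pi.single_apply, eq_comm]
  | succ k ih =>
    rw [pow_succ', ← Matrix.mulVec_mulVec, ih (Nat.le_of_succ_le hk)]
    ext i
    rw [Matrix.mulVec_single]
    simp only [Pi.smul_apply, Matrix.col_apply, op_smul_eq_mul, mul_one]
    simp only [companion, Matrix.of_apply]
    have hne : (⟨k, Nat.lt_succ_of_le (Nat.le_of_succ_le hk)⟩ : Fin (n + 1)) ≠ Fin.last n := by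
      simp [Fin.ext_iff]; omega
    rw [if_neg hne]
    by_cases h : i = (⟨k + 1, Nat.lt_succ_of_le hk⟩ : Fin (n + 1))
    · subst h; simp [Pi.single_apply]
    · rw [if_neg (by simpa [Fin.ext_iff] using h)]
      simp [Pi.single_apply, h]

lemma polyEval_mulVec_e0 {K : Type*} [Field K] {n : ℕ} (p : Fin (n + 1) → K)
    (g : Fin (n + 1) → K) :
    (polyEval g (companion p)).mulVec (Pi.single (0 : Fin (n + 1)) 1) = g := by
  unfold polyEval
  have hsum : (∑ i : Fin (n + 1), g i • companion p ^ (i : ℕ)) *ᵥ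
      Pi.single (0 : Fin (n + 1)) 1 =
      ∑ i : Fin (n + 1), (g i • companion p ^ (i : ℕ)) *ᵥ Pi.single (0 : Fin (n + 1)) 1 := by
    ext i
    simp only [Matrix.mulVec, dotProduct, Matrix.sum_apply, Finset.sum_apply, Finset.sum_mul]
    exact Finset.sum_comm
  rw [hsum]
  have : ∀ j : Fin (n + 1), (g j • (companion p) ^ (j : ℕ)).mulVec
      (Pi.single (0 : Fin (n + 1)) 1) = Pi.single j (g j) := by
    intro j
    rw [Matrix.smul_mulVec, companion_pow_e0 p j (Nat.le_of_lt_succ j.isLt)]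
    ext i
    simp [Pi.single_apply]
  rw [Finset.sum_congr rfl (fun j _ => this j)]
  ext i
  simp [Pi.single_apply]

lemma polyEval_comm {K : Type*} [Field K] {n : ℕ} (A : Matrix (Fin n) (Fin n) K)
    (b g : Fin n → K) : polyEval b A * polyEval g A = polyEval g A * polyEval b A := by
  unfold polyEval
  apply Commute.sum_left
  intro i _
  apply Commute.sum_right
  intro j _
  exact ((Commute.pow_pow (Commute.refl A) _ _).smul_left _).smul_right _

/-- The "curiously commuting vectors" identity
`[g, F_p g, …, F_p^{n-1} g] b = [b, F_p b, …, F_p^{n-1} b] g`. -/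
theorem companion_krylov_symm {K : Type*} [Field K] {n : ℕ} (p : Fin (n + 1) → K)
    (b g : Fin (n + 1) → K) :
    (krylov (companion p) g).mulVec b = (krylov (companion p) b).mulVec g := by
  rw [krylov_mulVec, krylov_mulVec]
  calc (polyEval b (companion p)).mulVec g
      = (polyEval b (companion p)).mulVec
        ((polyEval g (companion p)).mulVec (Pi.single 0 1)) := by
          rw [polyEval_mulVec_e0]
    _ = (polyEval b (companion p) * polyEval g (companion p)).mulVec (Pi.single 0 1) := by
          rw [Matrix.mulVec_mulVec]
    _ = (polyEval g (companion p) * polyEval b (companion p)).mulVec (Pi.single 0 1) := by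
          rw [polyEval_comm]
    _ = (polyEval g (companion p)).mulVec
        ((polyEval b (companion p)).mulVec (Pi.single 0 1)) := by
          rw [Matrix.mulVec_mulVec]
    _ = (polyEval g (companion p)).mulVec b := by rw [polyEval_mulVec_e0]
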